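/- Let A and B be groups, n ≥ 2, and let G_n = A(n)B be their n-th nilpotent product. Then the n-th term of the lower central series of A is contained in the centralizer of B in A, i.e. γ_n(A) ≤ C_A(B), and symmetrically γ_n(B) ≤ C_B(A), where A and B are regarded as subgroups of G_n. -/

import Mathlib

open Monoid

section NilpotentProduct

variable (A B : Type*) [Group A] [Group B] (n : ℕ)

/-- The Cartesian subgroup `[A,B]` of the free product `A ∗ B`: the kernel of the
natural homomorphism `A ∗ B →* A × B`. -/
def cartesianSubgroup : Subgroup (Coprod A B) := MonoidHom.ker (Coprod.toProd)

/-- The normal subgroup `[A,B] ∩ γ_{n+1}(A ∗ B)` defining the `n`-th nilpotent product.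
(Here `lowerCentralSeries H n = γ_{n+1}(H)` since Mathlib's indexing starts at `0`.) -/
def nilProdKer : Subgroup (Coprod A B) :=
  cartesianSubgroup A B ⊓ (⊤ : Subgroup (Coprod A B)).lowerCentralSeries n

instance : (nilProdKer A B n).Normal := by
  have h1 : (cartesianSubgroup A B).Normal := MonoidHom.normal_ker _
  have h2 : ((⊤ : Subgroup (Coprod A B)).lowerCentralSeries n).Normal := inferInstance
  exact Subgroup.normal_inf_normal _ _

/-- The `n`-th nilpotent product `A(n)B = (A ∗ B) / ([A,B] ∩ γ_{n+1}(A ∗ B))`. -/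
abbrev NilProd := Coprod A B ⧸ nilProdKer A B n

/-- The canonical embedding of `A` into `A(n)B`. -/
def nilProdInl : A →* NilProd A B n := (QuotientGroup.mk' _).comp Coprod.inl

/-- The canonical embedding of `B` into `A(n)B`. -/
def nilProdInr : B →* NilProd A B n := (QuotientGroup.mk' _).comp Coprod.inr

/-- `C_A(B)`: the centralizer of `B` in `A`, as a subgroup of `A(n)B`. -/
def CAB : Subgroup (NilProd A B n) :=
  (nilProdInl A B n).range ⊓ Subgroup.centralizer (Set.range (nilProdInr A B n))

/-- `C_B(A)`: the centralizer of `A` in `B`, as a subgroup of `A(n)B`. -/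
def CBA : Subgroup (NilProd A B n) :=
  (nilProdInr A B n).range ⊓ Subgroup.centralizer (Set.range (nilProdInl A B n))

end NilpotentProduct

open scoped commutatorElement

/-- If `u ∈ γ_{m+1}` and `⁅u,v⁆` dies in `A × B`, then `⁅u,v⁆ ∈ nilProdKer A B (m+1)`. -/
lemma comm_mem_nilProdKer {A B : Type*} [Group A] [Group B] {m : ℕ} {u v : Coprod A B}
    (hu : u ∈ (⊤ : Subgroup (Coprod A B)).lowerCentralSeries m)
    (h : Coprod.toProd ⁅u, v⁆ = 1) :
    ⁅u, v⁆ ∈ nilProdKer A B (m + 1) := by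
  constructor
  · exact h
  · rw [Subgroup.lowerCentralSeries_succ]
    exact Subgroup.commutator_mem_commutator hu (Subgroup.mem_top v)

lemma comm_eq_one_in_quot {A B : Type*} [Group A] [Group B] {m : ℕ} {u v : Coprod A B}
    (hu : u ∈ (⊤ : Subgroup (Coprod A B)).lowerCentralSeries m)
    (h : Coprod.toProd ⁅u, v⁆ = 1) :
    Commute (QuotientGroup.mk' (nilProdKer A B (m + 1)) u)
      (QuotientGroup.mk' (nilProdKer A B (m + 1)) v) := by
  rw [← commutatorElement_eq_one_iff_commute, ← map_commutatorElement]
  rw [QuotientGroup.mk'_apply, QuotientGroup.eq_one_iff]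
  exact comm_mem_nilProdKer hu h

/-- Lemma 1(i): `γ_n(A) ≤ C_A(B)` and `γ_n(B) ≤ C_B(A)` inside `G_n = A(n)B`. -/
theorem gamma_le_centralizer (A B : Type*) [Group A] [Group B] (n : ℕ) (hn : 2 ≤ n) :
    (((⊤ : Subgroup A).lowerCentralSeries (n - 1)).map (nilProdInl A B n) ≤ CAB A B n) ∧
    (((⊤ : Subgroup B).lowerCentralSeries (n - 1)).map (nilProdInr A B n) ≤ CBA A B n) := by
  obtain ⟨m, rfl⟩ : ∃ m, n = m + 1 := ⟨n - 1, (Nat.succ_pred_eq_of_pos (by omega)).symm⟩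
  constructor
  · rintro x ⟨a, ha, rfl⟩
    refine ⟨⟨a, rfl⟩, ?_⟩
    rintro y ⟨b, rfl⟩
    have hu : (Coprod.inl a : Coprod A B) ∈ (⊤ : Subgroup (Coprod A B)).lowerCentralSeries m :=
      Subgroup.lowerCentralSeries.map Coprod.inl m ⟨a, ha, rfl⟩
    have h : (Coprod.toProd ⁅(Coprod.inl a : Coprod A B), Coprod.inr b⁆ : A × B) = 1 := by
      rw [map_commutatorElement, commutatorElement_def]
      ext <;>
        simp [Coprod.fst_toProd, Coprod.snd_toProd]
    exact (comm_eq_one_in_quot hu h).symm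
  · rintro x ⟨b, hb, rfl⟩
    refine ⟨⟨b, rfl⟩, ?_⟩
    rintro y ⟨a, rfl⟩
    have hu : (Coprod.inr b : Coprod A B) ∈ (⊤ : Subgroup (Coprod A B)).lowerCentralSeries m :=
      Subgroup.lowerCentralSeries.map Coprod.inr m ⟨b, hb, rfl⟩
    have h : (Coprod.toProd ⁅(Coprod.inr b : Coprod A B), Coprod.inl a⁆ : A × B) = 1 := by
      rw [map_commutatorElement, commutatorElement_def]
      ext <;>
        simp [Coprod.fst_toProd, Coprod.snd_toProd]
    exact (comm_eq_one_in_quot hu h).symm
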